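/- Every nonnegative solution of the auxin transport system is conservative: if a : [0,∞) → ℝ^L is differentiable, satisfies a'(t) = f(a(t)) for all t ≥ 0, and a(t) has all components ≥ 0 for every t ≥ 0, then for all t ≥ 0 one has ∑_{i=1}^{L} a_i(t) = ∑_{i=1}^{L} a_i(0). -/

import Mathlib

open Finset Filter

/-- `auxN G κ a i = κ + ∑_{j ~ i} a_j`. -/
noncomputable def auxN {L : ℕ} (G : SimpleGraph (Fin L)) [DecidableRel G.Adj] (κ : ℝ)
    (a : Fin L → ℝ) (i : Fin L) : ℝ :=
  κ + ∑ j ∈ G.neighborFinset i, a j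

/-- The auxin transport vector field
`f_i(a) = D·∑_{k ~ i}(a_k − a_i) + T·∑_{k ~ i}(a_k·a_i/N_k(a) − a_i·a_k/N_i(a))`. -/
noncomputable def auxF {L : ℕ} (G : SimpleGraph (Fin L)) [DecidableRel G.Adj] (κ D T : ℝ)
    (a : Fin L → ℝ) (i : Fin L) : ℝ :=
  D * ∑ k ∈ G.neighborFinset i, (a k - a i) +
    T * ∑ k ∈ G.neighborFinset i,
      (a k * a i / auxN G κ a k - a i * a k / auxN G κ a i)

lemma aux_sum_swap {L : ℕ} (G : SimpleGraph (Fin L)) [DecidableRel G.Adj]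
    (g : Fin L → Fin L → ℝ) :
    ∑ i, ∑ k ∈ G.neighborFinset i, g i k = ∑ i, ∑ k ∈ G.neighborFinset i, g k i := by
  have h : ∀ h : Fin L → Fin L → ℝ, ∑ i, ∑ k ∈ G.neighborFinset i, h i k
      = ∑ i, ∑ k, if G.Adj i k then h i k else 0 := by
    intro h
    refine Finset.sum_congr rfl fun i _ => ?_
    rw [← Finset.sum_filter]
    congr 1
    ext k
    simp [SimpleGraph.mem_neighborFinset]
  rw [h g, h (fun i k => g k i)]
  rw [Finset.sum_comm]
  refine Finset.sum_congr rfl fun i _ => Finset.sum_congr rfl fun k _ => ?_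
  simp [G.adj_comm]

lemma aux_sum_F {L : ℕ} (G : SimpleGraph (Fin L)) [DecidableRel G.Adj] (κ D T : ℝ)
    (a : Fin L → ℝ) : ∑ i, auxF G κ D T a i = 0 := by
  unfold auxF
  rw [Finset.sum_add_distrib, ← Finset.mul_sum, ← Finset.mul_sum]
  have h1 : ∑ i, ∑ k ∈ G.neighborFinset i, (a k - a i) = 0 := by
    have := aux_sum_swap G (fun i k => a k - a i)
    simp only [Finset.sum_sub_distrib] at this ⊢
    linarith
  have h2 : ∑ i, ∑ k ∈ G.neighborFinset i,
      (a k * a i / auxN G κ a k - a i * a k / auxN G κ a i) = 0 := by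
    have := aux_sum_swap G
      (fun i k => a k * a i / auxN G κ a k - a i * a k / auxN G κ a i)
    have h3 : ∑ i, ∑ k ∈ G.neighborFinset i,
        (a i * a k / auxN G κ a i - a k * a i / auxN G κ a k)
        = - ∑ i, ∑ k ∈ G.neighborFinset i,
        (a k * a i / auxN G κ a k - a i * a k / auxN G κ a i) := by
      rw [← Finset.sum_neg_distrib]
      refine Finset.sum_congr rfl fun i _ => ?_
      rw [← Finset.sum_neg_distrib]
      refine Finset.sum_congr rfl fun k _ => by ring
    rw [this] at *
    linarith [h3]
  rw [h1, h2]; ring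

/-- Every nonnegative solution of the auxin transport system is conservative. -/
theorem auxin_conservative {L : ℕ} (hL : 1 ≤ L) (G : SimpleGraph (Fin L)) [DecidableRel G.Adj]
    (κ D T : ℝ) (hκ : 0 < κ) (hD : 0 ≤ D) (hT : 0 < T)
    (a : ℝ → Fin L → ℝ)
    (hderiv : ∀ t, 0 ≤ t → HasDerivAt a (auxF G κ D T (a t)) t)
    (hnonneg : ∀ t, 0 ≤ t → ∀ i, 0 ≤ a t i) :
    ∀ t, 0 ≤ t → ∑ i, a t i = ∑ i, a 0 i := by
  intro t ht
  have hS : ∀ s, 0 ≤ s → HasDerivAt (fun u => ∑ i, a u i) 0 s := by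
    intro s hs
    have h := hderiv s hs
    have hcomp : ∀ i : Fin L, HasDerivAt (fun u => a u i) (auxF G κ D T (a s) i) s := by
      intro i
      exact (hasDerivAt_pi.mp h) i
    have := HasDerivAt.fun_sum (u := (Finset.univ : Finset (Fin L)))
      (fun i _ => hcomp i)
    rwa [aux_sum_F] at this
  have hcont : ContinuousOn (fun u => ∑ i, a u i) (Set.Icc 0 t) := by
    intro x hx
    exact ((hS x hx.1).continuousAt).continuousWithinAt
  have := constant_of_has_deriv_right_zero hcont
    (fun x hx => ((hS x hx.1).hasDerivWithinAt)) t (Set.mem_Icc.mpr ⟨ht, le_refl t⟩)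
  exact this
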